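/- Suppose m > 0 and Requirement 1 holds. Let X* be the (nonempty, convex, compact) set of minimizers of f over C, let x* be the unique minimizer of g over X*, and for each k ≥ 1 let x_k* be the unique minimizer of J_k over ℝⁿ. Then g(x_k*) ≤ g(x*) and f(x_k*) ≤ f(x*) + p_k(x*) for every k ≥ 1. -/

import Mathlib

open Matrix Filter

noncomputable def fObj {n : ℕ} (Q : Matrix (Fin n) (Fin n) ℝ) (q : Fin n → ℝ) (x : Fin n → ℝ) : ℝ :=
  (1 / 2) * (x ⬝ᵥ Q.mulVec x) + q ⬝ᵥ x

noncomputable def gCon {n : ℕ} (A : Matrix (Fin n) (Fin n) ℝ) (v : Fin n → ℝ) (x : Fin n → ℝ) : ℝ :=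
  (x - v) ⬝ᵥ A.mulVec (x - v)

noncomputable def pPen {n : ℕ} (A : Matrix (Fin n) (Fin n) ℝ) (v : Fin n → ℝ) (m : ℝ) (k : ℕ)
    (x : Fin n → ℝ) : ℝ :=
  (m / (k : ℝ)) * (gCon A v x) ^ k

noncomputable def Jaux {n : ℕ} (Q : Matrix (Fin n) (Fin n) ℝ) (q : Fin n → ℝ)
    (A : Matrix (Fin n) (Fin n) ℝ) (v : Fin n → ℝ) (m : ℝ) (k : ℕ) (x : Fin n → ℝ) : ℝ :=
  fObj Q q x + pPen A v m k x

noncomputable def gradF {n : ℕ} (Q : Matrix (Fin n) (Fin n) ℝ) (q : Fin n → ℝ)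
    (x : Fin n → ℝ) : Fin n → ℝ :=
  Q.mulVec x + q

noncomputable def gradG {n : ℕ} (A : Matrix (Fin n) (Fin n) ℝ) (v : Fin n → ℝ)
    (x : Fin n → ℝ) : Fin n → ℝ :=
  (2 : ℝ) • A.mulVec (x - v)

noncomputable def gradJ {n : ℕ} (Q : Matrix (Fin n) (Fin n) ℝ) (q : Fin n → ℝ)
    (A : Matrix (Fin n) (Fin n) ℝ) (v : Fin n → ℝ) (m : ℝ) (k : ℕ) (x : Fin n → ℝ) : Fin n → ℝ :=
  gradF Q q x + (m * (gCon A v x) ^ (k - 1)) • gradG A v x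

noncomputable def lambdaMax {n : ℕ} (M : Matrix (Fin n) (Fin n) ℝ) : ℝ :=
  sSup {μ : ℝ | Module.End.HasEigenvalue (Matrix.toLin' M) μ}

noncomputable def lambdaMin {n : ℕ} (M : Matrix (Fin n) (Fin n) ℝ) : ℝ :=
  sInf {μ : ℝ | Module.End.HasEigenvalue (Matrix.toLin' M) μ}

noncomputable def enorm' {n : ℕ} (w : Fin n → ℝ) : ℝ := Real.sqrt (w ⬝ᵥ w)

def Req1 {n : ℕ} (Q : Matrix (Fin n) (Fin n) ℝ) (q : Fin n → ℝ)
    (A : Matrix (Fin n) (Fin n) ℝ) (v : Fin n → ℝ) (m : ℝ) : Prop :=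
  ∀ x : Fin n → ℝ, gCon A v x = 1 →
    0 ≤ gradG A v x ⬝ᵥ (gradF Q q x + m • gradG A v x)

noncomputable def Lsmooth {n : ℕ} (Q A : Matrix (Fin n) (Fin n) ℝ) (m : ℝ) (k : ℕ) : ℝ :=
  lambdaMax (Q + (m * (4 * (k : ℝ) - 2)) • A)

def Req2 {n : ℕ} (Q : Matrix (Fin n) (Fin n) ℝ) (q : Fin n → ℝ)
    (A : Matrix (Fin n) (Fin n) ℝ) (v : Fin n → ℝ) (m : ℝ) : Prop :=
  ∀ x : Fin n → ℝ, gCon A v x = 1 →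
    ((gradF Q q x + m • gradG A v x) ⬝ᵥ (gradF Q q x + m • gradG A v x)) * enorm' (gradG A v x) ≤
      2 * (Real.sqrt (lambdaMin A) / lambdaMax A) * Lsmooth Q A m 1 *
        ((gradF Q q x + m • gradG A v x) ⬝ᵥ gradG A v x)


section Helpers
variable {n : ℕ}

lemma bilin_comm (A : Matrix (Fin n) (Fin n) ℝ) (h : Aᵀ = A) (x y : Fin n → ℝ) :
    x ⬝ᵥ A.mulVec y = y ⬝ᵥ A.mulVec x := by
  rw [dotProduct_mulVec, ← mulVec_transpose, h, dotProduct_comm]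

lemma quad_expand (A : Matrix (Fin n) (Fin n) ℝ) (h : Aᵀ = A) (x d : Fin n → ℝ) (s : ℝ) :
    (x + s • d) ⬝ᵥ A.mulVec (x + s • d)
      = x ⬝ᵥ A.mulVec x + 2*s*(d ⬝ᵥ A.mulVec x) + s^2*(d ⬝ᵥ A.mulVec d) := by
  simp only [mulVec_add, mulVec_smul, dotProduct_add, add_dotProduct, dotProduct_smul,
    smul_dotProduct, smul_eq_mul]
  linear_combination s * bilin_comm A h x d

lemma dot_self_nonneg (w : Fin n → ℝ) : 0 ≤ w ⬝ᵥ w :=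
  Finset.sum_nonneg fun _ _ => mul_self_nonneg _

lemma dd_expand (x d y : Fin n → ℝ) (s : ℝ) :
    ((x + s • d) - y) ⬝ᵥ ((x + s • d) - y)
      = (x - y) ⬝ᵥ (x - y) + 2*s*(d ⬝ᵥ (x - y)) + s^2*(d ⬝ᵥ d) := by
  have h : x + s • d - y = (x - y) + s • d := by abel
  rw [h]
  simp only [dotProduct_add, add_dotProduct, dotProduct_smul, smul_dotProduct, smul_eq_mul]
  linear_combination s * dotProduct_comm (x - y) d

lemma pow_grad (a b : ℝ) (ha : 0 ≤ a) (hb : 0 ≤ b) (k : ℕ) (hk : 1 ≤ k) :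
    (k:ℝ) * b^(k-1) * (a - b) ≤ a^k - b^k := by
  rw [← geom_sum₂_mul a b k]
  rcases le_total b a with hba | hab
  · have h1 : ∀ i ∈ Finset.range k, b^(k-1) ≤ a^i * b^(k-1-i) := by
      intro i hi
      rw [Finset.mem_range] at hi
      have he : b^(k-1) = b^i * b^(k-1-i) := by rw [← pow_add]; congr 1; omega
      rw [he]
      exact mul_le_mul_of_nonneg_right (pow_le_pow_left₀ hb hba i) (pow_nonneg hb _)
    have h2 : (k:ℝ) * b^(k-1) ≤ ∑ i ∈ Finset.range k, a^i * b^(k-1-i) := by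
      calc (k:ℝ) * b^(k-1) = ∑ _i ∈ Finset.range k, b^(k-1) := by
            rw [Finset.sum_const, Finset.card_range, nsmul_eq_mul]
        _ ≤ _ := Finset.sum_le_sum h1
    exact mul_le_mul_of_nonneg_right h2 (by linarith)
  · have h1 : ∀ i ∈ Finset.range k, a^i * b^(k-1-i) ≤ b^(k-1) := by
      intro i hi
      rw [Finset.mem_range] at hi
      have he : b^(k-1) = b^i * b^(k-1-i) := by rw [← pow_add]; congr 1; omega
      rw [he]
      exact mul_le_mul_of_nonneg_right (pow_le_pow_left₀ ha hab i) (pow_nonneg hb _)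
    have h2 : ∑ i ∈ Finset.range k, a^i * b^(k-1-i) ≤ (k:ℝ) * b^(k-1) := by
      calc (∑ i ∈ Finset.range k, a^i * b^(k-1-i)) ≤ ∑ _i ∈ Finset.range k, b^(k-1) :=
            Finset.sum_le_sum h1
        _ = (k:ℝ) * b^(k-1) := by rw [Finset.sum_const, Finset.card_range, nsmul_eq_mul]
    exact mul_le_mul_of_nonpos_right h2 (by linarith)

end Helpers

section DefHelpers
variable {n : ℕ}

lemma fObj_expand (Q : Matrix (Fin n) (Fin n) ℝ) (hQ : Qᵀ = Q) (q b z : Fin n → ℝ) :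
    fObj Q q (b + z) = fObj Q q b + z ⬝ᵥ (Q.mulVec b + q) + (1/2)*(z ⬝ᵥ Q.mulVec z) := by
  unfold fObj
  simp only [mulVec_add, dotProduct_add, add_dotProduct]
  linear_combination (1/2) * bilin_comm Q hQ b z + dotProduct_comm q z

lemma gCon_add_smul (A : Matrix (Fin n) (Fin n) ℝ) (hA : Aᵀ = A) (v x d : Fin n → ℝ) (s : ℝ) :
    gCon A v (x + s • d)
      = gCon A v x + 2*s*(d ⬝ᵥ A.mulVec (x - v)) + s^2*(d ⬝ᵥ A.mulVec d) := by
  unfold gCon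
  have h : x + s • d - v = (x - v) + s • d := by abel
  rw [h, quad_expand A hA]

end DefHelpers

set_option maxHeartbeats 2000000 in
/-- With `m > 0` and Requirement 1, letting `X*` be the set of minimizers
of `f` over `C`, `x*` the (unique) minimizer of `g` over `X*`, and `x_k*` the (unique)
minimizer of `J_k` over `ℝⁿ`, one has `g(x_k*) ≤ g(x*)` and `f(x_k*) ≤ f(x*) + p_k(x*)`. -/
theorem auxiliary_minimizer_localization {n : ℕ} (hn : 1 ≤ n)
    (Q A : Matrix (Fin n) (Fin n) ℝ) (q v : Fin n → ℝ)
    (hQ : Q.PosSemidef) (hA : A.PosDef) (m : ℝ) (hm : 0 < m)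
    (hreq1 : Req1 Q q A v m)
    (xstar : Fin n → ℝ)
    (hxstar_mem : gCon A v xstar ≤ 1 ∧ ∀ y : Fin n → ℝ, gCon A v y ≤ 1 → fObj Q q xstar ≤ fObj Q q y)
    (hxstar_g : ∀ y : Fin n → ℝ,
      (gCon A v y ≤ 1 ∧ ∀ z : Fin n → ℝ, gCon A v z ≤ 1 → fObj Q q y ≤ fObj Q q z) →
      gCon A v xstar ≤ gCon A v y)
    (k : ℕ) (hk : 1 ≤ k)
    (xks : Fin n → ℝ) (hmin : ∀ x : Fin n → ℝ, Jaux Q q A v m k xks ≤ Jaux Q q A v m k x) :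
    gCon A v xks ≤ gCon A v xstar ∧
      fObj Q q xks ≤ fObj Q q xstar + pPen A v m k xstar := by
  have hAsym : Aᵀ = A := by
    have := hA.1; rwa [Matrix.IsHermitian, conjTranspose_eq_transpose_of_trivial] at this
  have hQsym : Qᵀ = Q := by
    have := hQ.1; rwa [Matrix.IsHermitian, conjTranspose_eq_transpose_of_trivial] at this
  have hg_nonneg : ∀ x : Fin n → ℝ, 0 ≤ gCon A v x := fun x => by
    have := hA.posSemidef.dotProduct_mulVec_nonneg (x - v); rw [star_trivial] at this; exact this
  have hQ2 : ∀ z : Fin n → ℝ, 0 ≤ z ⬝ᵥ Q.mulVec z := fun z => by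
    have := hQ.dotProduct_mulVec_nonneg z; rwa [star_trivial] at this
  have hA2 : ∀ z : Fin n → ℝ, 0 ≤ z ⬝ᵥ A.mulVec z := fun z => by
    have := hA.posSemidef.dotProduct_mulVec_nonneg z; rwa [star_trivial] at this
  have hA2' : ∀ z : Fin n → ℝ, z ≠ 0 → 0 < z ⬝ᵥ A.mulVec z := fun z hz => by
    have := hA.dotProduct_mulVec_pos hz; rwa [star_trivial] at this
  have hkR : (0:ℝ) < (k:ℝ) := by exact_mod_cast hk
  have hmk : 0 < m / (k:ℝ) := div_pos hm hkR
  have hkne : (k:ℝ) ≠ 0 := ne_of_gt hkR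
  -- Part 2
  have part2 : fObj Q q xks ≤ fObj Q q xstar + pPen A v m k xstar := by
    have h1 := hmin xstar
    have h2 : 0 ≤ pPen A v m k xks :=
      mul_nonneg hmk.le (pow_nonneg (hg_nonneg xks) k)
    unfold Jaux at h1; linarith
  -- Key claim: feasibility of xks
  have hfeas : gCon A v xks ≤ 1 := by
    by_contra hgt'
    push_neg at hgt'
    have hgt : 1 < gCon A v xks := hgt'
    -- distance function
    set dd : (Fin n → ℝ) → ℝ := fun x => (x - xks) ⬝ᵥ (x - xks) with hdd
    have hcontg : Continuous (gCon A v) := by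
      unfold gCon
      exact (continuous_id.sub continuous_const).dotProduct
        (continuous_const.matrix_mulVec (continuous_id.sub continuous_const))
    have hcontd : Continuous dd :=
      (continuous_id.sub continuous_const).dotProduct
        (continuous_id.sub continuous_const)
    have hdnonneg : ∀ x, 0 ≤ dd x := fun x => dot_self_nonneg _
    set K : Set (Fin n → ℝ) := {x | gCon A v x ≤ 1} ∩ {x | dd x ≤ dd xstar} with hK
    have hKcl : IsClosed K :=
      (isClosed_le hcontg continuous_const).inter (isClosed_le hcontd continuous_const)
    have hKbd : Bornology.IsBounded K := by
      apply (Metric.isBounded_closedBall (x := xks) (r := Real.sqrt (dd xstar))).subset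
      intro x hx
      rw [Metric.mem_closedBall]
      rw [dist_pi_le_iff (Real.sqrt_nonneg _)]
      intro i
      rw [Real.dist_eq]
      have h1 : (x i - xks i) * (x i - xks i) ≤ dd x := by
        exact Finset.single_le_sum (f := fun j => (x j - xks j) * (x j - xks j))
          (fun j _ => mul_self_nonneg _) (Finset.mem_univ i)
      have h2 : dd x ≤ dd xstar := hx.2
      have h3 : Real.sqrt (dd xstar) ^ 2 = dd xstar := Real.sq_sqrt (hdnonneg xstar)
      rw [abs_le]
      constructor <;> nlinarith [Real.sqrt_nonneg (dd xstar)]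
    have hKco : IsCompact K := Metric.isCompact_of_isClosed_isBounded hKcl hKbd
    have hKne : K.Nonempty := ⟨xstar, hxstar_mem.1, show dd xstar ≤ dd xstar from le_rfl⟩
    obtain ⟨b, hbK, hbmin0⟩ := hKco.exists_isMinOn hKne hcontd.continuousOn
    have hbC : gCon A v b ≤ 1 := hbK.1
    have hbmin : ∀ y : Fin n → ℝ, gCon A v y ≤ 1 → dd b ≤ dd y := by
      intro y hy
      by_cases hdy : dd y ≤ dd xstar
      · exact hbmin0 ⟨hy, hdy⟩
      · push_neg at hdy
        have : dd b ≤ dd xstar := hbK.2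
        linarith
    -- variational inequality
    have hvar : ∀ y : Fin n → ℝ, gCon A v y ≤ 1 → (xks - b) ⬝ᵥ (y - b) ≤ 0 := by
      intro y hy
      have hseg : ∀ t : ℝ, 0 ≤ t → t ≤ 1 → gCon A v (b + t • (y - b)) ≤ 1 := by
        intro t ht0 ht1
        have hy' : gCon A v y = gCon A v b + 2*1*((y - b) ⬝ᵥ A.mulVec (b - v))
            + 1^2*((y - b) ⬝ᵥ A.mulVec (y - b)) := by
          rw [← gCon_add_smul A hAsym, one_smul]
          congr 1; abel
        rw [gCon_add_smul A hAsym]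
        nlinarith [hA2 (y - b), mul_nonneg (sub_nonneg.2 ht1) (sub_nonneg.2 hbC),
          mul_nonneg ht0 (sub_nonneg.2 hy),
          mul_nonneg (mul_nonneg ht0 (sub_nonneg.2 ht1)) (hA2 (y - b))]
      have hP : ∀ t : ℝ, 0 < t → t ≤ 1 →
          (xks - b) ⬝ᵥ (y - b) ≤ t/2 * ((y - b) ⬝ᵥ (y - b)) := by
        intro t ht0 ht1
        have h1 := hbmin _ (hseg t ht0.le ht1)
        have h2 : dd (b + t • (y - b)) = dd b + 2*t*((y - b) ⬝ᵥ (b - xks))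
            + t^2*((y - b) ⬝ᵥ (y - b)) := dd_expand b (y - b) xks t
        have h3 : (y - b) ⬝ᵥ (b - xks) = -((xks - b) ⬝ᵥ (y - b)) := by
          rw [dotProduct_comm, show b - xks = -(xks - b) from by abel, neg_dotProduct]
        rw [h3] at h2
        rw [h2] at h1
        nlinarith [ht0]
      by_contra hPpos
      push_neg at hPpos
      have hS0 : 0 < (y - b) ⬝ᵥ (y - b) := by
        rcases eq_or_lt_of_le (dot_self_nonneg (y - b)) with h | h
        · exfalso
          have hz : y - b = 0 := dotProduct_self_eq_zero.mp h.symm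
          rw [hz, dotProduct_zero] at hPpos
          exact lt_irrefl 0 hPpos
        · exact h
      set t0 := min 1 (((xks - b) ⬝ᵥ (y - b)) / ((y - b) ⬝ᵥ (y - b))) with ht0def
      have ht0pos : 0 < t0 := lt_min one_pos (div_pos hPpos hS0)
      have hp1 := hP t0 ht0pos (min_le_left _ _)
      have hp2 : t0 * ((y - b) ⬝ᵥ (y - b)) ≤ (xks - b) ⬝ᵥ (y - b) := by
        have h4 : t0 ≤ ((xks - b) ⬝ᵥ (y - b)) / ((y - b) ⬝ᵥ (y - b)) := min_le_right _ _
        calc t0 * ((y - b) ⬝ᵥ (y - b))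
            ≤ (((xks - b) ⬝ᵥ (y - b)) / ((y - b) ⬝ᵥ (y - b))) * ((y - b) ⬝ᵥ (y - b)) :=
              mul_le_mul_of_nonneg_right h4 hS0.le
          _ = (xks - b) ⬝ᵥ (y - b) := div_mul_cancel₀ _ (ne_of_gt hS0)
      linarith
    -- b is on the boundary
    have hgb : gCon A v b = 1 := by
      rcases eq_or_lt_of_le hbC with h | h
      · exact h
      exfalso
      have hune : xks - b ≠ 0 := by
        intro h0
        rw [sub_eq_zero] at h0
        rw [h0] at hgt
        linarith
      have hSu : 0 < (xks - b) ⬝ᵥ (xks - b) := by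
        rcases eq_or_lt_of_le (dot_self_nonneg (xks - b)) with h2 | h2
        · exact absurd (dotProduct_self_eq_zero.mp h2.symm) hune
        · exact h2
      set c1 := (xks - b) ⬝ᵥ A.mulVec (b - v) with hc1
      set c2 := (xks - b) ⬝ᵥ A.mulVec (xks - b) with hc2
      have hc2n : 0 ≤ c2 := hA2 _
      have hden : 0 < 2*|c1| + c2 + 1 := by positivity
      set s := min 1 ((1 - gCon A v b) / (2*|c1| + c2 + 1)) with hsdef
      have hs0 : 0 < s := lt_min one_pos (div_pos (by linarith) hden)
      have hs1 : s ≤ 1 := min_le_left _ _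
      have hsle : s * (2*|c1| + c2 + 1) ≤ 1 - gCon A v b :=
        (le_div_iff₀ hden).mp (min_le_right _ _)
      have hy : gCon A v (b + s • (xks - b)) ≤ 1 := by
        rw [gCon_add_smul A hAsym, ← hc1, ← hc2]
        have e1 : 2*s*c1 ≤ 2*s*|c1| := by
          have := le_abs_self c1
          nlinarith [hs0.le]
        have e2 : s^2*c2 ≤ s*c2 := by nlinarith [mul_nonneg (mul_nonneg hs0.le (sub_nonneg.2 hs1)) hc2n]
        nlinarith [hs0]
      have h5 := hvar _ hy
      rw [show b + s • (xks - b) - b = s • (xks - b) from by abel, dotProduct_smul,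
        smul_eq_mul] at h5
      nlinarith [hSu, hs0]
    -- the normal N
    set N := A.mulVec (b - v) with hN
    have hNne : N ≠ 0 := by
      intro h0
      have : gCon A v b = 0 := by
        unfold gCon; rw [← hN, h0, dotProduct_zero]
      rw [hgb] at this; norm_num at this
    have hNN : 0 < N ⬝ᵥ N := by
      rcases eq_or_lt_of_le (dot_self_nonneg N) with h2 | h2
      · exact absurd (dotProduct_self_eq_zero.mp h2.symm) hNne
      · exact h2
    -- directional inequalities
    have hdir : ∀ w : Fin n → ℝ, w ⬝ᵥ N < 0 → (xks - b) ⬝ᵥ w ≤ 0 := by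
      intro w hc0
      have hden : 0 < w ⬝ᵥ A.mulVec w + 1 := by have := hA2 w; linarith
      set s := min 1 ((-(w ⬝ᵥ N)) / (w ⬝ᵥ A.mulVec w + 1)) with hsdef
      have hs0 : 0 < s := lt_min one_pos (div_pos (by linarith) hden)
      have hsle : s * (w ⬝ᵥ A.mulVec w + 1) ≤ -(w ⬝ᵥ N) :=
        (le_div_iff₀ hden).mp (min_le_right _ _)
      have hy : gCon A v (b + s • w) ≤ 1 := by
        rw [gCon_add_smul A hAsym, hgb, ← hN]
        nlinarith [mul_le_mul_of_nonneg_left hsle hs0.le, hA2 w, hs0, hc0, sq_nonneg s]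
      have h5 := hvar _ hy
      rw [show b + s • w - b = s • w from by abel, dotProduct_smul, smul_eq_mul] at h5
      rw [← mul_zero s] at h5
      exact (mul_le_mul_iff_right₀ hs0).mp h5
    have hdir' : ∀ w : Fin n → ℝ, w ⬝ᵥ N ≤ 0 → (xks - b) ⬝ᵥ w ≤ 0 := by
      intro w hw
      by_contra hp
      push_neg at hp
      have key : ∀ ε : ℝ, 0 < ε → (xks - b) ⬝ᵥ w ≤ ε * ((xks - b) ⬝ᵥ N) := by
        intro ε hε
        have h1 : (w - ε • N) ⬝ᵥ N < 0 := by
          rw [sub_dotProduct, smul_dotProduct, smul_eq_mul]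
          nlinarith [hNN]
        have h2 := hdir _ h1
        rw [dotProduct_sub, dotProduct_smul, smul_eq_mul] at h2
        linarith
      rcases le_or_gt ((xks - b) ⬝ᵥ N) 0 with h | h
      · have h1 := key 1 one_pos
        nlinarith
      · have h1 := key (((xks - b) ⬝ᵥ w) / (2 * ((xks - b) ⬝ᵥ N))) (div_pos hp (by linarith))
        have hgen : ∀ P Nv : ℝ, Nv ≠ 0 → P / (2*Nv) * Nv = P/2 := by
          intro P Nv hNv; field_simp
        have h2 := hgen ((xks - b) ⬝ᵥ w) ((xks - b) ⬝ᵥ N) (ne_of_gt h)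
        rw [h2] at h1
        linarith
    -- u = α • N
    have huN : 0 ≤ (xks - b) ⬝ᵥ N := by
      have h1 := hdir' (-N) (by rw [neg_dotProduct]; linarith)
      rw [dotProduct_neg] at h1
      linarith
    set α := ((xks - b) ⬝ᵥ N) / (N ⬝ᵥ N) with hαdef
    have hα0 : 0 ≤ α := div_nonneg huN hNN.le
    set r := (xks - b) - α • N with hrdef
    have hrN : r ⬝ᵥ N = 0 := by
      rw [hrdef, sub_dotProduct, smul_dotProduct, smul_eq_mul, hαdef,
        div_mul_cancel₀ _ (ne_of_gt hNN), sub_self]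
    have hur : (xks - b) ⬝ᵥ r ≤ 0 := hdir' r (le_of_eq hrN)
    have hrr : r ⬝ᵥ r ≤ 0 := by
      have h1 : xks - b = r + α • N := by rw [hrdef]; abel
      have h2 : N ⬝ᵥ r = 0 := by rw [dotProduct_comm]; exact hrN
      calc r ⬝ᵥ r = r ⬝ᵥ r + α * (N ⬝ᵥ r) := by rw [h2]; ring
        _ = (xks - b) ⬝ᵥ r := by
            rw [h1, add_dotProduct, smul_dotProduct, smul_eq_mul]
        _ ≤ 0 := hur
    have hr0 : r = 0 := dotProduct_self_eq_zero.mp (le_antisymm hrr (dot_self_nonneg r))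
    have hu : xks - b = α • N := by
      have := hr0
      rw [hrdef, sub_eq_zero] at this
      exact this
    -- convexity inequalities
    have hfconv : fObj Q q xks = fObj Q q b + (xks - b) ⬝ᵥ (Q.mulVec b + q)
        + (1/2)*((xks - b) ⬝ᵥ Q.mulVec (xks - b)) := by
      rw [← fObj_expand Q hQsym q b (xks - b)]
      congr 1; abel
    have hgconv : gCon A v xks = gCon A v b + 2*((xks - b) ⬝ᵥ N)
        + ((xks - b) ⬝ᵥ A.mulVec (xks - b)) := by
      have := gCon_add_smul A hAsym v b (xks - b) 1
      rw [one_smul, show b + (xks - b) = xks from by abel] at this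
      rw [this, hN]; ring
    have hpowi := pow_grad (gCon A v xks) 1 (hg_nonneg xks) zero_le_one k hk
    rw [one_pow, one_pow, mul_one] at hpowi
    -- lower bound J xks in terms of J b
    have hreq := hreq1 b hgb
    unfold gradG gradF at hreq
    simp only [smul_dotProduct, dotProduct_add, dotProduct_smul, smul_eq_mul] at hreq
    have hreq' : 0 ≤ (xks - b) ⬝ᵥ (Q.mulVec b + q) + 2*m*((xks - b) ⬝ᵥ N) := by
      rw [hu, smul_dotProduct, smul_dotProduct, smul_eq_mul, smul_eq_mul]
      rw [← hN] at hreq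
      simp only [dotProduct_add]
      nlinarith [mul_nonneg hα0 hreq]
    have hJbx : Jaux Q q A v m k b ≤ Jaux Q q A v m k xks := by
      unfold Jaux pPen
      rw [hgb, one_pow]
      have h5 : (m/(k:ℝ)) * ((k:ℝ) * (gCon A v xks - 1))
          ≤ (m/(k:ℝ)) * (gCon A v xks ^ k - 1) :=
        mul_le_mul_of_nonneg_left hpowi hmk.le
      have h6 : (m/(k:ℝ)) * ((k:ℝ) * (gCon A v xks - 1)) = m * (gCon A v xks - 1) := by
        field_simp
      rw [h6] at h5
      have h7 : 2*((xks - b) ⬝ᵥ N) ≤ gCon A v xks - 1 := by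
        have := hA2 (xks - b)
        rw [hgconv, hgb]
        linarith
      have h8 : m * (2*((xks - b) ⬝ᵥ N)) ≤ m * (gCon A v xks - 1) :=
        mul_le_mul_of_nonneg_left h7 hm.le
      have h9 := hQ2 (xks - b)
      nlinarith [hreq', hfconv]
    have hJxb := hmin b
    have hJeq : Jaux Q q A v m k b = Jaux Q q A v m k xks := le_antisymm hJbx hJxb
    -- midpoint contradiction
    have hbne : xks - b ≠ 0 := by
      intro h0
      rw [sub_eq_zero] at h0
      rw [h0, hgb] at hgt
      linarith
    have hzA : 0 < (xks - b) ⬝ᵥ A.mulVec (xks - b) := hA2' _ hbne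
    set w := b + (1/2 : ℝ) • (xks - b) with hwdef
    have hfw : fObj Q q w = fObj Q q b + (1/2)*((xks - b) ⬝ᵥ (Q.mulVec b + q))
        + (1/8)*((xks - b) ⬝ᵥ Q.mulVec (xks - b)) := by
      rw [hwdef, fObj_expand Q hQsym q b ((1/2 : ℝ) • (xks - b))]
      simp only [smul_dotProduct, mulVec_smul, dotProduct_smul, smul_eq_mul]
      ring
    have hgw : gCon A v w = 1 + ((xks - b) ⬝ᵥ N) + (1/4)*((xks - b) ⬝ᵥ A.mulVec (xks - b)) := by
      rw [hwdef, gCon_add_smul A hAsym, hgb, ← hN]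
      ring
    have hgw_lt : gCon A v w < (1/2)*1 + (1/2)*(gCon A v xks) := by
      rw [hgw]
      rw [hgconv, hgb]
      nlinarith [hzA]
    have hpw : (gCon A v w)^k < ((1/2)*1 + (1/2)*(gCon A v xks))^k :=
      pow_lt_pow_left₀ hgw_lt (hg_nonneg w) (by omega)
    have hconvpow : ((1/2)*(1:ℝ) + (1/2)*(gCon A v xks))^k
        ≤ (1/2)*1^k + (1/2)*(gCon A v xks)^k := by
      have := (convexOn_pow k).2 (Set.mem_Ici.2 zero_le_one)
        (Set.mem_Ici.2 (hg_nonneg xks)) (by norm_num : (0:ℝ) ≤ 1/2)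
        (by norm_num : (0:ℝ) ≤ 1/2) (by norm_num)
      simpa [smul_eq_mul] using this
    have hppw : (m/(k:ℝ)) * (gCon A v w)^k
        < (m/(k:ℝ)) * ((1/2)*1^k + (1/2)*(gCon A v xks)^k) :=
      mul_lt_mul_of_pos_left (lt_of_lt_of_le hpw hconvpow) hmk
    rw [one_pow] at hppw
    have hJw := hmin w
    have hQz := hQ2 (xks - b)
    unfold Jaux pPen at hJw hJeq
    rw [hgb, one_pow] at hJeq
    nlinarith [hfconv, hfw, hppw, hJw, hJeq]
  -- Part 1
  have part1 : gCon A v xks ≤ gCon A v xstar := by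
    have hfx : fObj Q q xstar ≤ fObj Q q xks := hxstar_mem.2 xks hfeas
    have h1 := hmin xstar
    unfold Jaux pPen at h1
    have h2 : (m/(k:ℝ)) * gCon A v xks ^ k ≤ (m/(k:ℝ)) * gCon A v xstar ^ k := by linarith
    have h3 : gCon A v xks ^ k ≤ gCon A v xstar ^ k := (mul_le_mul_iff_right₀ hmk).mp h2
    exact (pow_le_pow_iff_left₀ (hg_nonneg _) (hg_nonneg _) (by omega)).mp h3
  exact ⟨part1, part2⟩
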